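/- Let m be a positive integer. Set S₂ = {m, m+1, m+2}, let S₁ = {m+1 − 1/√3, m+1 + 1/√3} be the set of roots of the derivative of the polynomial (z−m)(z−m−1)(z−m−2), and set S₃ = {∞}. Then for every nonconstant meromorphic function h on ℂ, the functions f = h + 2(m+1) and g = −h satisfy E_f(S_j, ∞) = E_g(S_j, ∞) for j = 1, 2, 3 (in particular E_f(S₁, 0) = E_g(S₁, 0), E_f(S₂, 3) = E_g(S₂, 3), E_f(S₃, 1) = E_g(S₃, 1)), yet f ≢ g. -/

import Mathlib

open Complex Filter MeasureTheory Metric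
open scoped Classical

/-- The order of a function at a point, as an integer (`0` if not meromorphic or of
order `⊤`, i.e. identically zero near the point). -/
noncomputable def mOrd (f : ℂ → ℂ) (z : ℂ) : ℤ :=
  if h : MeromorphicAt f z then ((meromorphicOrderAt f z).untopD 0) else 0

/-- Multiplicity of `z` as an `α`-point of `f`. -/
noncomputable def zMult (f : ℂ → ℂ) (α z : ℂ) : ℕ :=
  (mOrd (fun w => f w - α) z).toNat

/-- Multiplicity of `z` as a pole of `f`. -/
noncomputable def pMult (f : ℂ → ℂ) (z : ℂ) : ℕ :=
  (-(mOrd f z)).toNat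

/-- Pointwise contribution of `z` to the multiset `E_f(S, k)`:
an `α`-point (`α ∈ S`) of multiplicity `m` counts `m` times if `m ≤ k`, else `k+1` times. -/
noncomputable def Ecount (f : ℂ → ℂ) (S : Set ℂ) (k : ℕ) (z : ℂ) : ℕ :=
  ∑ᶠ α ∈ S, min (zMult f α z) (k + 1)

/-- `f` and `g` share the set `S ⊆ ℂ` with weight `k`, i.e. `E_f(S,k) = E_g(S,k)`. -/
def EshareEq (f g : ℂ → ℂ) (S : Set ℂ) (k : ℕ) : Prop :=
  ∀ z : ℂ, Ecount f S k z = Ecount g S k z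

/-- `f` and `g` share the set `S ⊆ ℂ` counting multiplicities (weight `∞`). -/
def EshareEqCM (f g : ℂ → ℂ) (S : Set ℂ) : Prop :=
  ∀ z : ℂ, (∑ᶠ α ∈ S, zMult f α z) = ∑ᶠ α ∈ S, zMult g α z

/-- `f` and `g` share `{∞}` with weight `k`. -/
def EpoleEq (f g : ℂ → ℂ) (k : ℕ) : Prop :=
  ∀ z : ℂ, min (pMult f z) (k + 1) = min (pMult g z) (k + 1)

/-- `f` and `g` share `{∞}` counting multiplicities. -/
def EpoleEqCM (f g : ℂ → ℂ) : Prop :=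
  ∀ z : ℂ, pMult f z = pMult g z

/-- Equality of meromorphic functions: `f ≡ g`, i.e. `f = g` off a countable set. -/
def MEq (f g : ℂ → ℂ) : Prop :=
  ∃ D : Set ℂ, D.Countable ∧ ∀ z ∉ D, f z = g z

/-- `f` is a nonconstant meromorphic function in the plane. -/
def MNonconst (f : ℂ → ℂ) : Prop :=
  MeromorphicOn f Set.univ ∧ ¬ ∃ c : ℂ, MEq f (fun _ => c)

/-- The unintegrated counting function of a pointwise (multiplicity) count `w`:
number of points in the closed disc of radius `t`, counted with `w`. -/
noncomputable def ncount (w : ℂ → ℕ) (t : ℝ) : ℕ :=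
  ∑ᶠ z ∈ closedBall (0 : ℂ) t, w z

/-- The integrated counting function associated to an unintegrated one. -/
noncomputable def integN (nf : ℝ → ℕ) (r : ℝ) : ℝ :=
  (∫ t in (0:ℝ)..r, ((nf t : ℝ) - (nf 0 : ℝ)) / t) + (nf 0 : ℝ) * Real.log r

/-- The Nevanlinna integrated counting function `N(r, f)` of the poles of `f`. -/
noncomputable def NN (f : ℂ → ℂ) (r : ℝ) : ℝ :=
  integN (ncount (pMult f)) r

/-- The Nevanlinna proximity function `m(r, f)`. -/
noncomputable def mprox (f : ℂ → ℂ) (r : ℝ) : ℝ :=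
  (2 * Real.pi)⁻¹ *
    ∫ θ in (0:ℝ)..(2 * Real.pi), Real.log (max ‖f (r * Complex.exp (θ * Complex.I))‖ 1)

/-- The Nevanlinna characteristic `T(r, f)`. -/
noncomputable def Tchar (f : ℂ → ℂ) (r : ℝ) : ℝ :=
  mprox f r + NN f r

/-- `u` is a quantity of type `S(r, h)` : `u r = o(T(r, h))` as `r → ∞`, outside a
possible exceptional set of finite linear measure. -/
def SmallWrt (h : ℂ → ℂ) (u : ℝ → ℝ) : Prop :=
  ∃ E : Set ℝ, volume E < ⊤ ∧
    Tendsto (fun r => u r / Tchar h r) (atTop ⊓ Filter.principal Eᶜ) (nhds 0)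


open scoped Topology in
lemma order_congr' {f g : ℂ → ℂ} {x : ℂ} (hf : MeromorphicAt f x) (hg : MeromorphicAt g x)
    (hfg : f =ᶠ[𝓝[≠] x] g) : meromorphicOrderAt f x = meromorphicOrderAt g x := by
  rcases eq_or_ne (meromorphicOrderAt f x) ⊤ with ho | ho
  · rw [ho, eq_comm, meromorphicOrderAt_eq_top_iff]
    rw [meromorphicOrderAt_eq_top_iff] at ho
    filter_upwards [ho, hfg] with z h1 h2
    rw [← h2]; exact h1
  · obtain ⟨n, hn⟩ := WithTop.ne_top_iff_exists.mp ho
    rw [← hn, eq_comm, meromorphicOrderAt_eq_int_iff hg]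
    obtain ⟨G, h1, h2, h3⟩ := (meromorphicOrderAt_eq_int_iff (n := n) hf).mp hn.symm
    refine ⟨G, h1, h2, ?_⟩
    filter_upwards [h3, hfg] with z hz1 hz2
    rw [← hz2]; exact hz1

open scoped Topology in
lemma mOrd_neg (f : ℂ → ℂ) (z : ℂ) : mOrd (fun w => -f w) z = mOrd f z := by
  by_cases hf : MeromorphicAt f z
  · have hnf : MeromorphicAt (fun w => -f w) z := hf.neg
    rw [mOrd, mOrd, dif_pos hf, dif_pos hnf]
    congr 1
    rcases eq_or_ne (meromorphicOrderAt f z) ⊤ with ho | ho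
    · rw [ho, meromorphicOrderAt_eq_top_iff]
      rw [meromorphicOrderAt_eq_top_iff] at ho
      filter_upwards [ho] with w hw
      simp [hw]
    · obtain ⟨n, hn⟩ := WithTop.ne_top_iff_exists.mp ho
      rw [← hn, meromorphicOrderAt_eq_int_iff hnf]
      obtain ⟨G, h1, h2, h3⟩ := (meromorphicOrderAt_eq_int_iff (n := n) hf).mp hn.symm
      refine ⟨fun w => -G w, h1.neg, by simpa using h2, ?_⟩
      filter_upwards [h3] with w hw
      simp [hw]
  · have hnf : ¬ MeromorphicAt (fun w => -f w) z := by
      intro hc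
      have h2 := hc.neg
      simp only [Pi.neg_def, neg_neg] at h2
      exact hf h2
    rw [mOrd, mOrd, dif_neg hf, dif_neg hnf]

open scoped Topology in
lemma pMult_add_const (f : ℂ → ℂ) (c : ℂ) (hc : c ≠ 0) (z : ℂ) :
    (-(mOrd (fun w => f w + c) z)).toNat = (-(mOrd f z)).toNat := by
  by_cases hf : MeromorphicAt f z
  · have hfc : MeromorphicAt (fun w => f w + c) z := hf.add (MeromorphicAt.const c z)
    rcases eq_or_ne (meromorphicOrderAt f z) ⊤ with ho | ho
    · -- f eventually 0, f + c eventually c, order 0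
      have hev : (fun w => f w + c) =ᶠ[𝓝[≠] z] (fun _ => c) := by
        filter_upwards [meromorphicOrderAt_eq_top_iff.mp ho] with w hw
        simp [hw]
      have h0 : meromorphicOrderAt (fun w => f w + c) z = (0 : ℤ) := by
        rw [meromorphicOrderAt_eq_int_iff hfc]
        exact ⟨fun _ => c, analyticAt_const, hc, by filter_upwards [hev] with w hw; simp [hw]⟩
      rw [mOrd, mOrd, dif_pos hf, dif_pos hfc, ho, h0]
      simp
    · obtain ⟨n, hn⟩ := WithTop.ne_top_iff_exists.mp ho
      obtain ⟨G, h1, h2, h3⟩ := (meromorphicOrderAt_eq_int_iff (n := n) hf).mp hn.symm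
      rcases lt_or_ge n 0 with hneg | hpos
      · -- pole case : order (f + c) = n
        set m := (-n).toNat with hm
        have hmn : (m : ℤ) = -n := Int.toNat_of_nonneg (by omega)
        have h0 : meromorphicOrderAt (fun w => f w + c) z = (n : ℤ) := by
          rw [meromorphicOrderAt_eq_int_iff hfc]
          refine ⟨fun w => G w + (w - z) ^ m * c, h1.add ((((analyticAt_id).sub
            analyticAt_const).pow m).mul analyticAt_const), ?_, ?_⟩
          · have hm1 : m ≠ 0 := by omega
            simpa [zero_pow hm1] using h2
          · filter_upwards [h3, self_mem_nhdsWithin] with w hw hwz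
            have hwz' : w - z ≠ 0 := sub_ne_zero.mpr hwz
            have key : (w - z) ^ (n : ℤ) * ((w - z) ^ m * c) = c := by
              rw [← mul_assoc, ← zpow_natCast (w - z) m, ← zpow_add₀ hwz', hmn]
              simp
            rw [smul_eq_mul, mul_add, key, hw, smul_eq_mul]
        rw [mOrd, mOrd, dif_pos hf, dif_pos hfc, h0, ← hn]
      · -- analytic case : both sides 0
        have h4 : (fun w => f w + c) =ᶠ[𝓝[≠] z]
            (fun w => (w - z) ^ n.toNat • G w + c) := by
          filter_upwards [h3] with w hw
          rw [hw]
          congr 2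
          rw [← zpow_natCast, Int.toNat_of_nonneg hpos]
        have hA : AnalyticAt ℂ (fun w => (w - z) ^ n.toNat • G w + c) z :=
          ((((analyticAt_id).sub analyticAt_const).pow _).smul h1).add analyticAt_const
        have h5 : meromorphicOrderAt (fun w => f w + c) z = meromorphicOrderAt (fun w => (w - z) ^ n.toNat • G w + c) z := order_congr' hfc hA.meromorphicAt h4
        have h6 : 0 ≤ meromorphicOrderAt (fun w => f w + c) z := by
          rw [h5, hA.meromorphicOrderAt_eq]
          rcases eq_or_ne (analyticOrderAt (fun w => (w - z) ^ n.toNat • G w + c) z) ⊤ with h | h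
          · rw [h, ENat.map_top]; exact le_top
          · obtain ⟨k, hk⟩ := WithTop.ne_top_iff_exists.mp h
            rw [← hk]; change (0 : WithTop ℤ) ≤ ((k : ℤ) : WithTop ℤ)
            exact_mod_cast Int.natCast_nonneg k
        have h7 : (0 : ℤ) ≤ (meromorphicOrderAt (fun w => f w + c) z).untopD 0 := by
          rcases eq_or_ne (meromorphicOrderAt (fun w => f w + c) z) ⊤ with h | h
          · simp [h]
          · obtain ⟨k, hk⟩ := WithTop.ne_top_iff_exists.mp h
            rw [← hk] at h6 ⊢
            simpa using h6
        rw [mOrd, mOrd, dif_pos hf, dif_pos hfc, ← hn]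
        simp only [WithTop.untopD_coe]
        omega
  · have hfc : ¬ MeromorphicAt (fun w => f w + c) z := by
      intro hcon
      have := hcon.sub (MeromorphicAt.const c z)
      simp only [Pi.sub_def, add_sub_cancel_right] at this
      exact hf this
    rw [mOrd, mOrd, dif_neg hf, dif_neg hfc]

lemma zMult_add_const (f : ℂ → ℂ) (c α z : ℂ) :
    zMult (fun w => f w + c) α z = zMult f (α - c) z := by
  have hfe : (fun w => (f w + c) - α) = (fun w => f w - (α - c)) := by
    funext w; ring
  unfold zMult
  rw [hfe]

lemma zMult_neg (f : ℂ → ℂ) (α z : ℂ) :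
    zMult (fun w => -f w) α z = zMult f (-α) z := by
  have hfe : (fun w => (-f w) - α) = (fun w => -(f w - (-α))) := by
    funext w; ring
  unfold zMult
  rw [hfe]
  exact congrArg Int.toNat (mOrd_neg (fun w => f w - (-α)) z)

lemma finsum_mem_triple {M : Type*} [AddCommMonoid M] (F : ℂ → M) {a b c : ℂ}
    (hab : a ≠ b) (hac : a ≠ c) (hbc : b ≠ c) :
    ∑ᶠ x ∈ ({a, b, c} : Set ℂ), F x = F a + F b + F c := by
  have hset : ({a, b, c} : Set ℂ) = (({a, b, c} : Finset ℂ) : Set ℂ) := by simp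
  rw [hset, finsum_mem_coe_finset,
    Finset.sum_insert (by simp [hab, hac]),
    Finset.sum_insert (by simp [hbc]), Finset.sum_singleton, add_assoc]

/-- **Note 1.4 (general family of examples).** For a positive integer `m`, with
`S₂ = {m, m+1, m+2}`, `S₁ = {m+1 - 1/√3, m+1 + 1/√3}` the roots of the derivative of
`(z-m)(z-m-1)(z-m-2)`, and `S₃ = {∞}`, the functions `f = h + 2(m+1)` and `g = -h`
share each `Sⱼ` counting multiplicities (hence with weights `(0, 3, 1)`) for every
nonconstant meromorphic `h`, yet `f ≢ g`. -/
theorem example_consecutive_integers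
    (m : ℕ) (hm : 1 ≤ m) (h : ℂ → ℂ) (hh : MNonconst h) :
    ({z : ℂ | 3 * z ^ 2 - 6 * ((m : ℂ) + 1) * z + (3 * ((m : ℂ) + 1) ^ 2 - 1) = 0}
        = {(m : ℂ) + 1 - 1 / (Real.sqrt 3 : ℂ), (m : ℂ) + 1 + 1 / (Real.sqrt 3 : ℂ)}) ∧
      EshareEqCM (fun z => h z + 2 * ((m : ℂ) + 1)) (fun z => -h z)
        {(m : ℂ) + 1 - 1 / (Real.sqrt 3 : ℂ), (m : ℂ) + 1 + 1 / (Real.sqrt 3 : ℂ)} ∧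
      EshareEqCM (fun z => h z + 2 * ((m : ℂ) + 1)) (fun z => -h z)
        {(m : ℂ), (m : ℂ) + 1, (m : ℂ) + 2} ∧
      EpoleEqCM (fun z => h z + 2 * ((m : ℂ) + 1)) (fun z => -h z) ∧
      EshareEq (fun z => h z + 2 * ((m : ℂ) + 1)) (fun z => -h z)
        {(m : ℂ) + 1 - 1 / (Real.sqrt 3 : ℂ), (m : ℂ) + 1 + 1 / (Real.sqrt 3 : ℂ)} 0 ∧
      EshareEq (fun z => h z + 2 * ((m : ℂ) + 1)) (fun z => -h z)
        {(m : ℂ), (m : ℂ) + 1, (m : ℂ) + 2} 3 ∧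
      EpoleEq (fun z => h z + 2 * ((m : ℂ) + 1)) (fun z => -h z) 1 ∧
      ¬ MEq (fun z => h z + 2 * ((m : ℂ) + 1)) (fun z => -h z) := by
  have hs3 : ((Real.sqrt 3 : ℝ) : ℂ) ≠ 0 := by
    simp only [ne_eq, Complex.ofReal_eq_zero]
    positivity
  have ht0 : (1 / (Real.sqrt 3 : ℂ)) ≠ 0 := by
    simpa using hs3
  have ht2 : 3 * (1 / (Real.sqrt 3 : ℂ)) ^ 2 = 1 := by
    have h3 : ((Real.sqrt 3 : ℝ) : ℂ) ^ 2 = 3 := by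
      rw [← Complex.ofReal_pow, Real.sq_sqrt (by norm_num : (3:ℝ) ≥ 0)]
      norm_num
    field_simp
    linear_combination -h3
  set t : ℂ := 1 / (Real.sqrt 3 : ℂ) with htdef
  set a : ℂ := (m : ℂ) + 1 with hadef
  have hAB : a - t ≠ a + t := by
    intro hq
    exact ht0 (by linear_combination (-1/2 : ℂ) * hq)
  have h01 : (m : ℂ) ≠ (m : ℂ) + 1 := by
    intro hq; exact one_ne_zero (α := ℂ) (by linear_combination -hq)
  have h02 : (m : ℂ) ≠ (m : ℂ) + 2 := by
    intro hq; exact two_ne_zero (α := ℂ) (by linear_combination -hq)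
  have h12 : (m : ℂ) + 1 ≠ (m : ℂ) + 2 := by
    intro hq; exact one_ne_zero (α := ℂ) (by linear_combination -hq)
  have hc0 : (2 : ℂ) * ((m : ℂ) + 1) ≠ 0 := by
    refine mul_ne_zero two_ne_zero ?_
    exact_mod_cast Nat.cast_add_one_ne_zero (R := ℂ) m
  have e1 : (m : ℂ) + 1 - 1 / (Real.sqrt 3 : ℂ) - 2 * ((m : ℂ) + 1)
      = -((m : ℂ) + 1 + 1 / (Real.sqrt 3 : ℂ)) := by ring
  have e2 : (m : ℂ) + 1 + 1 / (Real.sqrt 3 : ℂ) - 2 * ((m : ℂ) + 1)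
      = -((m : ℂ) + 1 - 1 / (Real.sqrt 3 : ℂ)) := by ring
  have e3 : (m : ℂ) - 2 * ((m : ℂ) + 1) = -((m : ℂ) + 2) := by ring
  have e4 : (m : ℂ) + 1 - 2 * ((m : ℂ) + 1) = -((m : ℂ) + 1) := by ring
  have e5 : (m : ℂ) + 2 - 2 * ((m : ℂ) + 1) = -(m : ℂ) := by ring
  have hpoleCM : EpoleEqCM (fun z => h z + 2 * ((m : ℂ) + 1)) (fun z => -h z) := by
    intro z
    unfold pMult
    rw [mOrd_neg]
    exact pMult_add_const h _ hc0 z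
  refine ⟨?_, ?_, ?_, hpoleCM, ?_, ?_, fun z => by rw [hpoleCM z], ?_⟩
  · -- roots of the derivative
    ext z
    simp only [Set.mem_setOf_eq, Set.mem_insert_iff, Set.mem_singleton_iff]
    constructor
    · intro hz
      have factor : (z - (a - t)) * (z - (a + t)) = 0 := by
        linear_combination (1/3 : ℂ) * hz - (1/3 : ℂ) * ht2
      rcases mul_eq_zero.mp factor with hq | hq
      · left; linear_combination hq
      · right; linear_combination hq
    · rintro (rfl | rfl) <;> linear_combination ht2
  · -- EshareEqCM S₁
    intro z
    rw [finsum_mem_pair hAB, finsum_mem_pair hAB, zMult_add_const, zMult_add_const,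
      zMult_neg, zMult_neg, e1, e2, add_comm]
  · -- EshareEqCM S₂
    intro z
    rw [finsum_mem_triple _ h01 h02 h12, finsum_mem_triple _ h01 h02 h12,
      zMult_add_const, zMult_add_const, zMult_add_const,
      zMult_neg, zMult_neg, zMult_neg, e3, e4, e5]
    ring
  · -- EshareEq S₁ 0
    intro z
    unfold Ecount
    rw [finsum_mem_pair hAB, finsum_mem_pair hAB, zMult_add_const, zMult_add_const,
      zMult_neg, zMult_neg, e1, e2, add_comm]
  · -- EshareEq S₂ 3
    intro z
    unfold Ecount
    rw [finsum_mem_triple _ h01 h02 h12, finsum_mem_triple _ h01 h02 h12,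
      zMult_add_const, zMult_add_const, zMult_add_const,
      zMult_neg, zMult_neg, zMult_neg, e3, e4, e5]
    ring
  · -- f ≢ g
    rintro ⟨D, hD, hEq⟩
    refine hh.2 ⟨-((m : ℂ) + 1), D, hD, fun z hz => ?_⟩
    have hq := hEq z hz
    simp only at hq
    linear_combination (1/2 : ℂ) * hq
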